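/- No graph in the class G_sc has a stable cutset. -/

import Mathlib

open SimpleGraph

/-- `S` is a stable cutset of `G`: an independent set whose removal disconnects `G`. -/
def SimpleGraph.IsStableCutset {V : Type*} (G : SimpleGraph V) (S : Set V) : Prop :=
  (∀ a ∈ S, ∀ b ∈ S, ¬ G.Adj a b) ∧ ¬ (G.induce Sᶜ).Preconnected

def SimpleGraph.HasStableCutset {V : Type*} (G : SimpleGraph V) : Prop :=
  ∃ S : Set V, G.IsStableCutset S

/-- The cycle on six vertices. -/
def CycleSix : SimpleGraph (Fin 6) := SimpleGraph.fromRel (fun i j => j = i + 1)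

/-- The complement of `C₆`, i.e. the triangular prism. -/
def PrismGraph : SimpleGraph (Fin 6) := CycleSixᶜ

/-- Graphs on (subsets of) a fixed ambient vertex type `α`, with graph-wise
union and intersection given by the lattice structure. -/
abbrev AmbGraph (α : Type*) := SimpleGraph.Subgraph (⊤ : SimpleGraph α)

def IsK2 {α : Type*} (H : AmbGraph α) : Prop :=
  Nonempty (H.coe ≃g (⊤ : SimpleGraph (Fin 2)))

def IsK3 {α : Type*} (H : AmbGraph α) : Prop :=
  Nonempty (H.coe ≃g (⊤ : SimpleGraph (Fin 3)))

def IsPrism {α : Type*} (H : AmbGraph α) : Prop :=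
  Nonempty (H.coe ≃g PrismGraph)

/-- The class `G_sc` of Le and Pfender. -/
inductive Gsc {α : Type*} : AmbGraph α → Prop
  | k3 (H : AmbGraph α) : IsK3 H → Gsc H
  | prism (H : AmbGraph α) : IsPrism H → Gsc H
  | union (G H : AmbGraph α) : Gsc G → Gsc H →
      (IsK2 (G ⊓ H) ∨ IsK3 (G ⊓ H)) → Gsc (G ⊔ H)

/- ### Auxiliary material -/

instance : DecidableRel CycleSix.Adj :=
  inferInstanceAs <| DecidableRel fun v w => v ≠ w ∧ ((w = v + 1) ∨ (v = w + 1))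

instance : DecidableRel PrismGraph.Adj :=
  inferInstanceAs <| DecidableRel fun v w => v ≠ w ∧ ¬ CycleSix.Adj v w

/-- Transfer of `HasStableCutset` along a graph isomorphism. -/
lemma hasStableCutset_of_iso {V W : Type*} {A : SimpleGraph V} {B : SimpleGraph W}
    (e : A ≃g B) (h : A.HasStableCutset) : B.HasStableCutset := by
  obtain ⟨S, hind, hnpre⟩ := h
  refine ⟨e.symm ⁻¹' S, ?_, ?_⟩
  · intro a ha b hb hadj
    exact hind _ ha _ hb (e.symm.map_adj_iff.mpr hadj)
  · intro hpre
    apply hnpre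
    have hnc : ∀ a : V, a ∈ Sᶜ ↔ e a ∈ (e.symm ⁻¹' S)ᶜ := by
      intro a
      simp [Set.mem_compl_iff, Set.mem_preimage]
    let f : (A.induce Sᶜ) ≃g (B.induce (e.symm ⁻¹' S)ᶜ) :=
      { toEquiv := Equiv.subtypeEquiv e.toEquiv (fun a => hnc a)
        map_rel_iff' := by
          intro a b
          exact e.map_adj_iff }
    intro x y
    have := hpre (f x) (f y)
    have h2 := this.map f.symm.toHom
    simpa using h2

/-- The complete graph never has a stable cutset. -/
lemma top_no_stableCutset (β : Type*) : ¬ (⊤ : SimpleGraph β).HasStableCutset := by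
  rintro ⟨S, hind, hnpre⟩
  apply hnpre
  intro a b
  by_cases hab : a = b
  · exact hab ▸ Reachable.refl a
  · have : ((⊤ : SimpleGraph β).induce Sᶜ).Adj a b := by
      simp only [comap_adj, top_adj]
      exact fun h => hab (Subtype.ext h)
    exact this.reachable

lemma prism_decidable_fact : ∀ T : Finset (Fin 6),
    (∀ a ∈ T, ∀ b ∈ T, ¬ PrismGraph.Adj a b) →
    (PrismGraph.induce (↑T : Set (Fin 6))ᶜ).Preconnected := by decide

/-- The prism has no stable cutset. -/
lemma prism_no_stableCutset : ¬ PrismGraph.HasStableCutset := by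
  rintro ⟨S, hind, hnpre⟩
  apply hnpre
  have hfin : S.Finite := Set.toFinite S
  have hS : S = ↑hfin.toFinset := (Set.Finite.coe_toFinset hfin).symm
  rw [hS] at hind ⊢
  exact prism_decidable_fact hfin.toFinset (by simpa using hind)

/-- Key gluing lemma: if `G` and `H` have no stable cutset and `w` is a common vertex
avoiding `S`, with `S` independent in `G ⊔ H`, then `(G ⊔ H) - S` is preconnected. -/
lemma union_preconnected {α : Type*} (G H : AmbGraph α)
    (hG : ¬ G.coe.HasStableCutset) (hH : ¬ H.coe.HasStableCutset)
    (w : α) (hwG : w ∈ G.verts) (hwH : w ∈ H.verts)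
    (S : Set ↥(G ⊔ H).verts)
    (hwS : (⟨w, Subgraph.verts_mono le_sup_left hwG⟩ : ↥(G ⊔ H).verts) ∉ S)
    (hind : ∀ a ∈ S, ∀ b ∈ S, ¬ (G ⊔ H).coe.Adj a b) :
    ((G ⊔ H).coe.induce Sᶜ).Preconnected := by
  classical
  -- the shadow of S in G and H
  let SG : Set ↥G.verts :=
    fun x => (⟨x.1, Subgraph.verts_mono le_sup_left x.2⟩ : ↥(G ⊔ H).verts) ∈ S
  let SH : Set ↥H.verts :=
    fun x => (⟨x.1, Subgraph.verts_mono le_sup_right x.2⟩ : ↥(G ⊔ H).verts) ∈ S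
  have hSGind : ∀ a ∈ SG, ∀ b ∈ SG, ¬ G.coe.Adj a b := by
    intro a ha b hb hadj
    exact hind _ ha _ hb (Subgraph.sup_adj.mpr (Or.inl hadj))
  have hSHind : ∀ a ∈ SH, ∀ b ∈ SH, ¬ H.coe.Adj a b := by
    intro a ha b hb hadj
    exact hind _ ha _ hb (Subgraph.sup_adj.mpr (Or.inr hadj))
  have hGpre : (G.coe.induce SGᶜ).Preconnected := by
    by_contra hn
    exact hG ⟨SG, hSGind, hn⟩
  have hHpre : (H.coe.induce SHᶜ).Preconnected := by
    by_contra hn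
    exact hH ⟨SH, hSHind, hn⟩
  -- homs into the big induced graph
  let fG : (G.coe.induce SGᶜ) →g ((G ⊔ H).coe.induce Sᶜ) :=
    { toFun := fun x => ⟨⟨x.1.1, Subgraph.verts_mono le_sup_left x.1.2⟩, x.2⟩
      map_rel' := by
        intro a b hab
        exact Subgraph.sup_adj.mpr (Or.inl hab) }
  let fH : (H.coe.induce SHᶜ) →g ((G ⊔ H).coe.induce Sᶜ) :=
    { toFun := fun x => ⟨⟨x.1.1, Subgraph.verts_mono le_sup_right x.1.2⟩, x.2⟩
      map_rel' := by
        intro a b hab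
        exact Subgraph.sup_adj.mpr (Or.inr hab) }
  set wbig : ↥Sᶜ := ⟨⟨w, Subgraph.verts_mono le_sup_left hwG⟩, hwS⟩ with hwbig
  -- every vertex reaches `wbig`
  have key : ∀ a : ↥Sᶜ, ((G ⊔ H).coe.induce Sᶜ).Reachable a wbig := by
    intro a
    have hmem : a.1.1 ∈ G.verts ∪ H.verts := a.1.2
    rcases hmem with hmG | hmH
    · have haSG : (⟨a.1.1, hmG⟩ : ↥G.verts) ∈ SGᶜ := by
        simp only [SG, Set.mem_compl_iff, Set.mem_setOf_eq]
        intro hmemS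
        exact a.2 hmemS
      have hwSG : (⟨w, hwG⟩ : ↥G.verts) ∈ SGᶜ := by
        simp only [SG, Set.mem_compl_iff, Set.mem_setOf_eq]
        intro hmemS
        exact hwS hmemS
      have hr := hGpre ⟨⟨a.1.1, hmG⟩, haSG⟩ ⟨⟨w, hwG⟩, hwSG⟩
      have := hr.map fG
      convert this using 2 <;> rfl
    · have haSH : (⟨a.1.1, hmH⟩ : ↥H.verts) ∈ SHᶜ := by
        simp only [SH, Set.mem_compl_iff, Set.mem_setOf_eq]
        intro hmemS
        exact a.2 hmemS
      have hwSH : (⟨w, hwH⟩ : ↥H.verts) ∈ SHᶜ := by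
        simp only [SH, Set.mem_compl_iff, Set.mem_setOf_eq]
        intro hmemS
        exact hwS hmemS
      have hr := hHpre ⟨⟨a.1.1, hmH⟩, haSH⟩ ⟨⟨w, hwH⟩, hwSH⟩
      have := hr.map fH
      convert this using 2 <;> rfl
  intro a b
  exact (key a).trans (key b).symm

/-- No graph in `G_sc` has a stable cutset. -/
theorem gsc_no_stableCutset {α : Type*} (G : AmbGraph α) (h : Gsc G) :
    ¬ G.coe.HasStableCutset := by
  induction h with
  | k3 H hk3 =>
    obtain ⟨e⟩ := hk3
    exact fun hc => top_no_stableCutset (Fin 3) (hasStableCutset_of_iso e hc)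
  | prism H hp =>
    obtain ⟨e⟩ := hp
    exact fun hc => prism_no_stableCutset (hasStableCutset_of_iso e hc)
  | union G H _ _ hK ihG ihH =>
    -- extract a common edge u-v of G and H
    have hedge : ∃ u v : α, u ∈ G.verts ∧ u ∈ H.verts ∧ v ∈ G.verts ∧ v ∈ H.verts ∧
        G.Adj u v ∧ H.Adj u v := by
      have hadj : ∃ x y : ↥(G ⊓ H).verts, (G ⊓ H).coe.Adj x y := by
        rcases hK with he | he
        · let e := Classical.choice he
          exact ⟨e.symm 0, e.symm 1, e.symm.map_adj_iff.mpr (by decide)⟩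
        · let e := Classical.choice he
          exact ⟨e.symm 0, e.symm 1, e.symm.map_adj_iff.mpr (by decide)⟩
      obtain ⟨x, y, hxy⟩ := hadj
      have hx : x.1 ∈ G.verts ∩ H.verts := x.2
      have hy : y.1 ∈ G.verts ∩ H.verts := y.2
      have hxy' : G.Adj x.1 y.1 ∧ H.Adj x.1 y.1 := Subgraph.inf_adj.mp hxy
      exact ⟨x.1, y.1, hx.1, hx.2, hy.1, hy.2, hxy'⟩
    obtain ⟨u, v, huG, huH, hvG, hvH, hGuv, hHuv⟩ := hedge
    rintro ⟨S, hind, hnpre⟩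
    apply hnpre
    by_cases huS : (⟨u, Subgraph.verts_mono le_sup_left huG⟩ : ↥(G ⊔ H).verts) ∈ S
    · -- then v ∉ S since u-v is an edge of G ⊔ H
      have hvS : (⟨v, Subgraph.verts_mono le_sup_left hvG⟩ : ↥(G ⊔ H).verts) ∉ S := by
        intro hvS
        exact hind _ huS _ hvS (Subgraph.sup_adj.mpr (Or.inl hGuv))
      exact union_preconnected G H ihG ihH v hvG hvH S hvS hind
    · exact union_preconnected G H ihG ihH u huG huH S huS hind
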